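/- Let b ≥ 0 and let B ≡ b be the constant function on (0,1). Then: (i) if b = 0 or b = 1, then K(B) = ∅; (ii) if b ∉ {0, 1}, then K(B) = { i·(1/(2√b))·log|(√b + 1)/(√b − 1)| + (π/√b)·(n + c) : n ∈ ℤ }, where c = 0 if b > 1 and c = 1/2 if b < 1. -/

import Mathlib

open MeasureTheory Set Complex intervalIntegral

noncomputable section

/-- The Lebesgue measure restricted to the interval `(0,1)`. -/
def mu01 : Measure ℝ := volume.restrict (Set.Ioo 0 1)

/-- `y` (with derivative `y'`) is a `W^{2,∞}` solution of `y'' + z² B y = 0` on `(0,1)`: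
`y ∈ C¹[0,1]`, `y'` is Lipschitz (so `y'' ∈ L^∞` exists a.e.), and the equation holds a.e. -/
def IsW2Sol (B : ℝ → ℂ) (z : ℂ) (y y' : ℝ → ℂ) : Prop :=
  (∀ x ∈ Set.Icc (0:ℝ) 1, HasDerivWithinAt y (y' x) (Set.Icc (0:ℝ) 1) x) ∧
  (∃ L : NNReal, LipschitzOnWith L y' (Set.Icc (0:ℝ) 1)) ∧
  (∀ᵐ x ∂mu01, HasDerivAt y' (-(z^2) * B x * y x) x)

/-- `κ` is a quasi-eigenvalue of the structure `B`: `κ ≠ 0` and there is a nonzero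
`W^{2,∞}` solution of `y'' + κ² B y = 0` with `y'(0) = 0` and `κ y(1) = i y'(1)`. -/
def QuasiEigen (B : ℝ → ℂ) (κ : ℂ) : Prop :=
  κ ≠ 0 ∧ ∃ y y' : ℝ → ℂ, IsW2Sol B κ y y' ∧
    (∃ x ∈ Set.Icc (0:ℝ) 1, y x ≠ 0) ∧ y' 0 = 0 ∧ κ * y 1 = Complex.I * y' 1

/-- `y` is the solution `φ(·, z; B)` (normalized by `y(0)=1`, `y'(0)=0`). -/
def IsPhi (B : ℝ → ℂ) (z : ℂ) (y y' : ℝ → ℂ) : Prop :=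
  IsW2Sol B z y y' ∧ y 0 = 1 ∧ y' 0 = 0

/-- `y` is the solution `ψ(·, z; B)` (normalized by `y(0)=0`, `y'(0)=1`). -/
def IsPsi (B : ℝ → ℂ) (z : ℂ) (y y' : ℝ → ℂ) : Prop :=
  IsW2Sol B z y y' ∧ y 0 = 0 ∧ y' 0 = 1

/-- Membership of a real-valued structure in the admissible family `Ad`:
`B ∈ L^∞((0,1);ℝ)` with `b1 ≤ B(x) ≤ b2` a.e. on `(0,1)`. -/
def InAd (b1 b2 : ℝ) (B : ℝ → ℝ) : Prop :=
  AEStronglyMeasurable B mu01 ∧ ∀ᵐ x ∂mu01, b1 ≤ B x ∧ B x ≤ b2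

/-- The set `K(Ad)` of all quasi-eigenvalues of admissible structures. -/
def KAd (b1 b2 : ℝ) : Set ℂ :=
  {κ | ∃ B : ℝ → ℝ, InAd b1 b2 B ∧ QuasiEigen (fun x => ((B x : ℝ) : ℂ)) κ}

lemma lip_ae_deriv_zero_real {K : NNReal} {g : ℝ → ℝ} {a b : ℝ} (hab : a ≤ b)
    (hg : LipschitzOnWith K g (Set.Icc a b))
    (hd : ∀ᵐ t ∂(volume.restrict (Set.Ioo a b)), HasDerivAt g 0 t) :
    g b ≤ g a := by
  rcases eq_or_lt_of_le hab with rfl | hab'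
  · exact le_refl _
  have hC : (0:ℝ) < (b - a) + K + 1 := by
    have := K.coe_nonneg
    linarith
  refine le_of_forall_pos_le_add fun δ hδ => ?_
  set ε : ℝ := δ / ((b - a) + K + 1) with hεdef
  have hεpos : 0 < ε := div_pos hδ hC
  -- the null set of non-differentiability, together with `a`
  have hNnull : volume ((Set.Ioo a b ∩ {t | ¬ HasDerivAt g 0 t}) ∪ {a}) = 0 := by
    refine measure_union_null ?_ (measure_singleton a)
    have h1 := ae_iff.1 hd
    rw [Measure.restrict_apply' measurableSet_Ioo] at h1
    simpa [Set.inter_comm] using h1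
  have hlt : volume ((Set.Ioo a b ∩ {t | ¬ HasDerivAt g 0 t}) ∪ {a}) < ENNReal.ofReal ε := by
    rw [hNnull]; exact ENNReal.ofReal_pos.2 hεpos
  obtain ⟨U, hUN, hUopen, hUvol⟩ := Set.exists_isOpen_lt_of_lt _ _ hlt
  set m : ℝ → ℝ := fun t => (volume (U ∩ Set.Ioc a t)).toReal with hmdef
  have hUfin : ∀ s : Set ℝ, volume (U ∩ s) ≠ ⊤ := fun s =>
    (lt_of_le_of_lt (measure_mono (Set.inter_subset_left)) (hUvol.trans_le le_top)).ne
  have hUfin' : ∀ s : Set ℝ, volume (U ∩ s) < ⊤ := fun s =>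
    lt_of_le_of_lt (measure_mono (Set.inter_subset_left)) (lt_of_lt_of_le hUvol le_top)
  have hmadd : ∀ t u : ℝ, a ≤ t → t ≤ u →
      m u = m t + (volume (U ∩ Set.Ioc t u)).toReal := by
    intro t u hat htu
    have hsplit : U ∩ Set.Ioc a u = (U ∩ Set.Ioc a t) ∪ (U ∩ Set.Ioc t u) := by
      rw [← Set.inter_union_distrib_left, Set.Ioc_union_Ioc_eq_Ioc hat htu]
    have hdisj : Disjoint (U ∩ Set.Ioc a t) (U ∩ Set.Ioc t u) :=
      (Set.Ioc_disjoint_Ioc_of_le le_rfl).mono Set.inter_subset_right Set.inter_subset_right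
    have hmeas : MeasurableSet (U ∩ Set.Ioc t u) :=
      (hUopen.measurableSet.inter measurableSet_Ioc)
    rw [hmdef]
    simp only
    rw [hsplit, measure_union hdisj hmeas, ENNReal.toReal_add (hUfin _) (hUfin _)]
  have hmincr : ∀ t u : ℝ, t ≤ u → (volume (U ∩ Set.Ioc t u)).toReal ≤ u - t := by
    intro t u htu
    have h1 : volume (U ∩ Set.Ioc t u) ≤ ENNReal.ofReal (u - t) := by
      refine le_trans (measure_mono Set.inter_subset_right) ?_
      rw [Real.volume_Ioc]
    exact ENNReal.toReal_le_of_le_ofReal (by linarith) h1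
  have hmnonneg : ∀ t, 0 ≤ m t := fun t => ENNReal.toReal_nonneg
  -- m is 1-Lipschitz on [a, b]
  have hmlip : LipschitzOnWith 1 m (Set.Icc a b) := by
    rw [lipschitzOnWith_iff_dist_le_mul]
    intro x hx y hy
    rcases le_total y x with h | h
    · have := hmadd y x hy.1 h
      rw [Real.dist_eq, Real.dist_eq]
      have h2 := hmincr y x h
      have h3 := ENNReal.toReal_nonneg (a := volume (U ∩ Set.Ioc y x))
      rw [abs_le]
      constructor <;> [skip; skip] <;> rw [_root_.abs_of_nonneg (by linarith : (0:ℝ) ≤ x - y)] <;>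
        push_cast <;> linarith
    · have := hmadd x y hx.1 h
      rw [Real.dist_eq, Real.dist_eq]
      have h2 := hmincr x y h
      have h3 := ENNReal.toReal_nonneg (a := volume (U ∩ Set.Ioc x y))
      rw [abs_le]
      constructor <;> rw [_root_.abs_of_nonpos (by linarith : x - y ≤ 0)] <;> push_cast <;> linarith
  -- the invariant set
  set s : Set ℝ := {t | g t - g a ≤ ε * (t - a) + K * m t} with hsdef
  have hscl : IsClosed (s ∩ Set.Icc a b) := by
    have hcont : ContinuousOn (fun t => (g t - g a - ε * (t - a) - K * m t, (0:ℝ))) (Set.Icc a b) := by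
      refine ContinuousOn.prodMk ?_ continuousOn_const
      exact (((hg.continuousOn.sub continuousOn_const).sub
        (Continuous.continuousOn (by continuity))).sub (hmlip.continuousOn.const_smul (K:ℝ)))
    rw [Set.inter_comm]
    have : s ∩ Set.Icc a b = Set.Icc a b ∩
        (fun t => (g t - g a - ε * (t - a) - K * m t, (0:ℝ))) ⁻¹' {p : ℝ × ℝ | p.1 ≤ p.2} := by
      ext t
      simp only [hsdef, Set.mem_inter_iff, Set.mem_setOf_eq, Set.mem_preimage]
      constructor
      · rintro ⟨h1, h2⟩; exact ⟨h2, show g t - g a - ε * (t - a) - K * m t ≤ 0 by linarith⟩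
      · rintro ⟨h1, h2⟩; have h2' : g t - g a - ε * (t - a) - K * m t ≤ 0 := h2; exact ⟨by linarith, h1⟩
    rw [Set.inter_comm] at this
    rw [this]
    exact hcont.preimage_isClosed_of_isClosed isClosed_Icc isClosed_le_prod
  have hma : m a = 0 := by simp [hmdef]
  have hmem_a : a ∈ s := by
    simp only [hsdef, Set.mem_setOf_eq, hma]
    simp
  have hstep : ∀ x ∈ s ∩ Set.Ico a b, ∀ v ∈ Set.Ioi x, (s ∩ Set.Ioc x v).Nonempty := by
    rintro x ⟨hxs, hxab⟩ v hv
    by_cases hxU : x ∈ U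
    · -- Lipschitz step inside U
      obtain ⟨δ', hδ'pos, hball⟩ := Metric.isOpen_iff.1 hUopen x hxU
      set u : ℝ := min v (min (x + δ'/2) b) with hudef
      have hxu : x < u := by
        refine lt_min hv (lt_min (by linarith) hxab.2)
      have hub : u ≤ b := le_trans (min_le_right _ _) (min_le_right _ _)
      have huv : u ≤ v := min_le_left _ _
      have hsub : Set.Ioc x u ⊆ U := by
        intro w hw
        apply hball
        rw [Metric.mem_ball, Real.dist_eq, _root_.abs_of_pos (by linarith [hw.1] : (0:ℝ) < w - x)]
        have : u ≤ x + δ'/2 := le_trans (min_le_right _ _) (min_le_left _ _)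
        have := hw.2
        linarith
      have hmu : m u = m x + (u - x) := by
        rw [hmadd x u hxab.1 hxu.le]
        congr 1
        rw [Set.inter_eq_self_of_subset_right hsub, Real.volume_Ioc,
          ENNReal.toReal_ofReal (by linarith)]
      have hgu : g u - g x ≤ K * (u - x) := by
        have hd2 := hg.dist_le_mul u ⟨by linarith [hxab.1], hub⟩ x ⟨hxab.1, hxab.2.le⟩
        rw [Real.dist_eq, Real.dist_eq, _root_.abs_of_pos (by linarith : (0:ℝ) < u - x)] at hd2
        calc g u - g x ≤ |g u - g x| := le_abs_self _
        _ ≤ K * (u - x) := hd2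
      refine ⟨u, ?_, hxu, huv⟩
      simp only [hsdef, Set.mem_setOf_eq] at hxs ⊢
      rw [hmu]
      have hεx : ε * (x - a) ≤ ε * (u - a) := by nlinarith
      nlinarith
    · -- derivative step
      have hxa : x ≠ a := by
        rintro rfl
        exact hxU (hUN (Set.mem_union_right _ rfl))
      have hxIoo : x ∈ Set.Ioo a b := ⟨lt_of_le_of_ne hxab.1 (Ne.symm hxa), hxab.2⟩
      have hderiv : HasDerivAt g 0 x := by
        by_contra hcon
        exact hxU (hUN (Set.mem_union_left _ ⟨hxIoo, hcon⟩))
      have hslope : ∀ᶠ z in nhdsWithin x (Set.Ioi x), slope g x z < ε :=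
        ((hderiv.hasDerivWithinAt (s := Set.Ioi x)).limsup_slope_le'
          (by simp) hεpos)
      have hIoc : Set.Ioc x (min v b) ∈ nhdsWithin x (Set.Ioi x) :=
        Ioc_mem_nhdsGT (lt_min hv hxab.2)
      obtain ⟨u, hu1, hu2⟩ := (hslope.and (Filter.eventually_of_mem hIoc (fun w hw => hw))).exists
      have hu2' : u ∈ Set.Ioc x (min v b) := hu2
      have hxu : x < u := hu2'.1
      have hub : u ≤ b := le_trans hu2'.2 (min_le_right _ _)
      have hgu : g u - g x ≤ ε * (u - x) := by
        rw [slope_def_field] at hu1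
        have := (div_le_iff₀ (by linarith : (0:ℝ) < u - x)).1 hu1.le
        linarith
      refine ⟨u, ?_, hxu, le_trans hu2'.2 (min_le_left _ _)⟩
      simp only [hsdef, Set.mem_setOf_eq] at hxs ⊢
      have hmux : m x ≤ m u := by
        rw [hmadd x u hxab.1 hxu.le]
        have := ENNReal.toReal_nonneg (a := volume (U ∩ Set.Ioc x u))
        linarith
      have hKm : (K:ℝ) * m x ≤ K * m u := by
        have : (0:ℝ) ≤ K := K.coe_nonneg
        nlinarith
      nlinarith
  have hfinal : b ∈ s := (hscl.Icc_subset_of_forall_exists_gt hmem_a hstep) ⟨hab, le_refl b⟩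
  simp only [hsdef, Set.mem_setOf_eq] at hfinal
  have hmb : m b ≤ ε := by
    have h1 : volume (U ∩ Set.Ioc a b) ≤ ENNReal.ofReal ε :=
      le_trans (measure_mono Set.inter_subset_left) hUvol.le
    exact ENNReal.toReal_le_of_le_ofReal hεpos.le h1
  have hKε : (K:ℝ) * m b ≤ K * ε := by
    have : (0:ℝ) ≤ K := K.coe_nonneg
    nlinarith [hmnonneg b]
  have : g b - g a ≤ ε * ((b - a) + K + 1) := by nlinarith [hεpos.le]
  rw [hεdef] at this
  rw [div_mul_cancel₀] at this
  · linarith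
  · exact hC.ne'

lemma lip_ae_deriv_zero_const {K : NNReal} {f : ℝ → ℂ} {a b : ℝ}
    (hg : LipschitzOnWith K f (Set.Icc a b))
    (hd : ∀ᵐ t ∂(volume.restrict (Set.Ioo a b)), HasDerivAt f 0 t) :
    ∀ x ∈ Set.Icc a b, f x = f a := by
  intro x hx
  have hax : a ≤ x := hx.1
  have hlip' : LipschitzOnWith K f (Set.Icc a x) := hg.mono (Set.Icc_subset_Icc le_rfl hx.2)
  have hd' : ∀ᵐ t ∂(volume.restrict (Set.Ioo a x)), HasDerivAt f 0 t :=
    hd.filter_mono (ae_mono (Measure.restrict_mono (Set.Ioo_subset_Ioo_right hx.2) le_rfl))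
  -- real and imaginary parts, both directions
  have key : ∀ (l : ℂ →L[ℝ] ℝ), l (f x) = l (f a) := by
    intro l
    have hKl : ∀ (u : ℝ → ℝ), (∀ t, u t = l (f t)) → LipschitzOnWith (‖l‖₊ * K) u (Set.Icc a x) := by
      intro u hu
      have : u = fun t => l (f t) := funext hu
      rw [this]
      exact (l.lipschitz.lipschitzOnWith).comp hlip' (Set.mapsTo_image _ _)
    have hdl : ∀ᵐ t ∂(volume.restrict (Set.Ioo a x)), HasDerivAt (fun t => l (f t)) 0 t := by
      filter_upwards [hd'] with t ht
      have := l.hasFDerivAt.comp_hasDerivAt t ht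
      simpa [Function.comp_def] using this
    have h1 : l (f x) ≤ l (f a) :=
      lip_ae_deriv_zero_real (g := fun t => l (f t)) (b := x) hax (hKl _ fun t => rfl) hdl
    have hdl2 : ∀ᵐ t ∂(volume.restrict (Set.Ioo a x)), HasDerivAt (fun t => -(l (f t))) 0 t := by
      filter_upwards [hdl] with t ht
      simpa using ht.fun_neg
    have hKl2 : LipschitzOnWith (‖l‖₊ * K) (fun t => -(l (f t))) (Set.Icc a x) := by
      have := (hKl _ fun t => rfl)
      rw [lipschitzOnWith_iff_dist_le_mul] at this ⊢
      intro p hp q hq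
      simpa [dist_neg_neg] using this p hp q hq
    have h2 : -(l (f x)) ≤ -(l (f a)) := lip_ae_deriv_zero_real (g := fun t => -(l (f t))) (b := x) hax hKl2 hdl2
    linarith
  have hre := key Complex.reCLM
  have him := key Complex.imCLM
  simp only [Complex.reCLM_apply, Complex.imCLM_apply] at hre him
  exact Complex.ext hre him

-- derivative of t ↦ cos (μ t), t ↦ sin (μ t) as functions ℝ → ℂ
lemma hasDerivAt_ccos (μ : ℂ) (t : ℝ) :
    HasDerivAt (fun u : ℝ => Complex.cos (μ * u)) (-μ * Complex.sin (μ * t)) t := by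
  have h1 : HasDerivAt (fun z : ℂ => Complex.cos (μ * z)) (-Complex.sin (μ * t) * μ) (t : ℂ) := by
    have := (Complex.hasDerivAt_cos (μ * (t:ℂ))).comp (t:ℂ)
      ((hasDerivAt_id ((t:ℝ) : ℂ)).const_mul μ)
    simpa [mul_one, Function.comp_def] using this
  have := h1.comp_ofReal
  convert this using 1
  ring

lemma hasDerivAt_csin (μ : ℂ) (t : ℝ) :
    HasDerivAt (fun u : ℝ => Complex.sin (μ * u)) (μ * Complex.cos (μ * t)) t := by
  have h1 : HasDerivAt (fun z : ℂ => Complex.sin (μ * z)) (Complex.cos (μ * t) * μ) (t : ℂ) := by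
    have := (Complex.hasDerivAt_sin (μ * (t:ℂ))).comp (t:ℂ)
      ((hasDerivAt_id ((t:ℝ) : ℂ)).const_mul μ)
    simpa [mul_one, Function.comp_def] using this
  have := h1.comp_ofReal
  convert this using 1
  ring

lemma sol_closed_form {b : ℝ} (hb : 0 < b) {κ : ℂ} (hκ : κ ≠ 0)
    {y y' : ℝ → ℂ} (h : IsW2Sol (fun _ => (b:ℂ)) κ y y')
    (h0 : y' 0 = 0) :
    ∀ x ∈ Set.Icc (0:ℝ) 1,
      y x = y 0 * Complex.cos ((Real.sqrt b : ℂ) * κ * x) ∧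
      y' x = -((Real.sqrt b : ℂ) * κ) * y 0 * Complex.sin ((Real.sqrt b : ℂ) * κ * x) := by
  obtain ⟨hy, ⟨L, hL⟩, hae⟩ := h
  set μ : ℂ := (Real.sqrt b : ℂ) * κ with hμdef
  have hs0 : Real.sqrt b ≠ 0 := by positivity
  have hμ0 : μ ≠ 0 := mul_ne_zero (by exact_mod_cast hs0) hκ
  have hμ2 : μ ^ 2 = κ ^ 2 * (b : ℂ) := by
    rw [hμdef, mul_pow]
    have : ((Real.sqrt b : ℂ)) ^ 2 = ((Real.sqrt b ^ 2 : ℝ) : ℂ) := by push_cast; ring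
    rw [this, Real.sq_sqrt hb.le]
    ring
  have hycont : ContinuousOn y (Set.Icc 0 1) := fun x hx => (hy x hx).continuousWithinAt
  -- a globally continuous version of the right-hand side
  set proj : ℝ → ℝ := fun t => max 0 (min 1 t) with hprojdef
  have hprojcont : Continuous proj := by fun_prop
  have hprojmem : ∀ t, proj t ∈ Set.Icc (0:ℝ) 1 := fun t =>
    ⟨le_max_left _ _, max_le (by norm_num) (min_le_left _ _)⟩
  have hprojeq : ∀ t ∈ Set.Icc (0:ℝ) 1, proj t = t := by
    intro t ht
    simp only [hprojdef]
    rw [min_eq_right ht.2, max_eq_right ht.1]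
  set G : ℝ → ℂ := fun t => -(κ ^ 2) * (b : ℂ) * y (proj t) with hGdef
  have hGcont : Continuous G := by
    refine continuous_const.mul ?_
    exact (hycont.comp_continuous hprojcont hprojmem)
  set P : ℝ → ℂ := fun u => ∫ t in (0:ℝ)..u, G t with hPdef
  have hPd : ∀ x : ℝ, HasDerivAt P (G x) x := by
    intro x
    exact intervalIntegral.integral_hasDerivAt_right
      (hGcont.intervalIntegrable _ _)
      (hGcont.stronglyMeasurableAtFilter _ _)
      hGcont.continuousAt
  -- a bound for G on [0,1] : gives Lipschitz bound for P
  obtain ⟨C, hC⟩ := (isCompact_Icc (a := (0:ℝ)) (b := 1)).exists_bound_of_continuousOn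
    hGcont.continuousOn
  have hPlip : LipschitzOnWith (Real.toNNReal C) P (Set.Icc 0 1) := by
    refine (convex_Icc (0:ℝ) 1).lipschitzOnWith_of_nnnorm_hasDerivWithin_le
      (f' := G) (fun x hx => (hPd x).hasDerivWithinAt) ?_
    intro x hx
    rw [← NNReal.coe_le_coe]
    simp only [coe_nnnorm, Real.coe_toNNReal']
    exact le_trans (hC x hx) (le_max_left _ _)
  -- y' - P is Lipschitz on [0,1] with a.e. zero derivative, so y' = y' 0 + P = P
  have hsub : ∀ x ∈ Set.Icc (0:ℝ) 1, y' x - P x = y' 0 - P 0 := by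
    have hlip : LipschitzOnWith (L + Real.toNNReal C) (fun t => y' t - P t) (Set.Icc 0 1) := by
      rw [lipschitzOnWith_iff_dist_le_mul]
      intro p hp q hq
      have h1 := hL.dist_le_mul p hp q hq
      have h2 := hPlip.dist_le_mul p hp q hq
      calc dist (y' p - P p) (y' q - P q) ≤ dist (y' p) (y' q) + dist (P p) (P q) :=
        dist_sub_sub_le _ _ _ _
      _ ≤ (L + Real.toNNReal C) * dist p q := by push_cast; nlinarith [dist_nonneg (x := p) (y := q)]
    have hdz : ∀ᵐ t ∂(volume.restrict (Set.Ioo (0:ℝ) 1)), HasDerivAt (fun t => y' t - P t) 0 t := by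
      have hmem : ∀ᵐ t ∂(volume.restrict (Set.Ioo (0:ℝ) 1)), t ∈ Set.Ioo (0:ℝ) 1 :=
        ae_restrict_mem measurableSet_Ioo
      filter_upwards [hae, hmem] with t ht htm
      have hGt : G t = -(κ ^ 2) * (b : ℂ) * y t := by
        rw [hGdef]
        simp only []
        rw [hprojeq t ⟨htm.1.le, htm.2.le⟩]
      have := ht.fun_sub (hPd t)
      rw [hGt] at this
      simpa using this
    exact fun x hx => lip_ae_deriv_zero_const hlip hdz x hx
  have hP0 : P 0 = 0 := by simp [hPdef]
  have hy'eq : ∀ x ∈ Set.Icc (0:ℝ) 1, y' x = P x := by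
    intro x hx
    have := hsub x hx
    rw [h0, hP0] at this
    linear_combination this
  have hy'd : ∀ x ∈ Set.Icc (0:ℝ) 1,
      HasDerivWithinAt y' (-(κ ^ 2) * (b:ℂ) * y x) (Set.Icc 0 1) x := by
    intro x hx
    have h1 : HasDerivWithinAt P (G x) (Set.Icc 0 1) x := (hPd x).hasDerivWithinAt
    have h2 := h1.congr (fun t ht => hy'eq t ht) (hy'eq x hx)
    have hGx : G x = -(κ ^ 2) * (b : ℂ) * y x := by
      rw [hGdef]; simp only []; rw [hprojeq x hx]
    rwa [hGx] at h2
  -- the conserved quantities E and F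
  set E : ℝ → ℂ := fun t => y' t * Complex.cos (μ * t) + μ * y t * Complex.sin (μ * t) with hEdef
  set F : ℝ → ℂ := fun t => μ * y t * Complex.cos (μ * t) - y' t * Complex.sin (μ * t) with hFdef
  have hEd : ∀ x ∈ Set.Icc (0:ℝ) 1, HasDerivWithinAt E 0 (Set.Icc 0 1) x := by
    intro x hx
    have h1 := ((hy'd x hx).mul ((hasDerivAt_ccos μ x).hasDerivWithinAt)).add
      ((((hy x hx).const_mul μ).mul ((hasDerivAt_csin μ x).hasDerivWithinAt)))
    convert h1 using 1
    · rfl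
    · rfl
    have : -(κ ^ 2) * (b:ℂ) = -(μ^2) := by rw [hμ2]; ring
    rw [this]
    ring
  have hFd : ∀ x ∈ Set.Icc (0:ℝ) 1, HasDerivWithinAt F 0 (Set.Icc 0 1) x := by
    intro x hx
    have h1 := (((hy x hx).const_mul μ).mul ((hasDerivAt_ccos μ x).hasDerivWithinAt)).sub
      ((hy'd x hx).mul ((hasDerivAt_csin μ x).hasDerivWithinAt))
    convert h1 using 1
    · rfl
    · rfl
    have : -(κ ^ 2) * (b:ℂ) = -(μ^2) := by rw [hμ2]; ring
    rw [this]
    ring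
  have hconst : ∀ (W : ℝ → ℂ), (∀ x ∈ Set.Icc (0:ℝ) 1, HasDerivWithinAt W 0 (Set.Icc 0 1) x) →
      ∀ x ∈ Set.Icc (0:ℝ) 1, W x = W 0 := by
    intro W hW
    refine constant_of_has_deriv_right_zero (fun x hx => (hW x hx).continuousWithinAt) ?_
    intro x hx
    exact (hW x ⟨hx.1, hx.2.le⟩).mono_of_mem_nhdsWithin (Icc_mem_nhdsGE_of_mem hx)
  have hE0 : E 0 = 0 := by
    simp [hEdef, h0]
  have hF0 : F 0 = μ * y 0 := by
    simp [hFdef, h0]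
  intro x hx
  have hEx : y' x * Complex.cos (μ * x) + μ * y x * Complex.sin (μ * x) = 0 := by
    have := hconst E hEd x hx
    rw [hE0] at this
    exact this
  have hFx : μ * y x * Complex.cos (μ * x) - y' x * Complex.sin (μ * x) = μ * y 0 := by
    have := hconst F hFd x hx
    rw [hF0] at this
    exact this
  have htrig := Complex.cos_sq_add_sin_sq (μ * x)
  constructor
  · have hμy : μ * y x = μ * (y 0 * Complex.cos (μ * x)) := by
      linear_combination Complex.cos (μ * x) * hFx + Complex.sin (μ * x) * hEx
        - μ * y x * htrig
    exact mul_left_cancel₀ hμ0 hμy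
  · have : y' x = -μ * y 0 * Complex.sin (μ * x) := by
      linear_combination Complex.cos (μ * x) * hEx - Complex.sin (μ * x) * hFx
        - y' x * htrig
    rw [this]

lemma alg {b : ℝ} (hb : 0 < b) (hb1 : b ≠ 1) (κ : ℂ) :
    (Complex.cos ((Real.sqrt b:ℂ)*κ) + Complex.I * (Real.sqrt b:ℂ) * Complex.sin ((Real.sqrt b:ℂ)*κ) = 0)
    ↔ ∃ n : ℤ, κ = Complex.I *
        ((( 1 / (2 * Real.sqrt b)) *
          Real.log (|(Real.sqrt b + 1) / (Real.sqrt b - 1)|) : ℝ) : ℂ) +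
      (((Real.pi / Real.sqrt b) * ((n : ℝ) + (if 1 < b then (0:ℝ) else 1/2)) : ℝ) : ℂ) := by
  set s : ℝ := Real.sqrt b with hsdef
  have hs : 0 < s := Real.sqrt_pos.2 hb
  have hs2 : s ^ 2 = b := Real.sq_sqrt hb.le
  have hs1 : s ≠ 1 := by
    intro h
    apply hb1
    rw [← hs2, h]; norm_num
  have hsC : (s:ℂ) ≠ 0 := by exact_mod_cast hs.ne'
  set w : ℂ := (s:ℂ) * κ with hwdef
  set r : ℝ := (s - 1) / (s + 1) with hrdef
  have hs1' : s + 1 ≠ 0 := by positivity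
  have hr0 : r ≠ 0 := div_ne_zero (sub_ne_zero.2 hs1) hs1'
  have hrC : (r:ℂ) ≠ 0 := by exact_mod_cast hr0
  set c : ℝ := if 1 < b then (0:ℝ) else 1/2 with hcdef
  set A : ℝ := |(s + 1) / (s - 1)| with hAdef
  -- step 1 : the equation is equivalent to exp (2*w*I) = r
  have hexp1 : Complex.exp (w * I) = Complex.cos w + Complex.sin w * I := Complex.exp_mul_I w
  have hexp2 : Complex.exp (-(w * I)) = Complex.cos w - Complex.sin w * I := by
    have h := Complex.exp_mul_I (-w)
    rw [Complex.cos_neg, Complex.sin_neg] at h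
    rw [show -(w*I) = -w*I by ring, h]
    ring
  have hprod : Complex.exp (w * I) * Complex.exp (-(w * I)) = 1 := by
    rw [← Complex.exp_add]; simp
  have h2w : Complex.exp (2 * w * I) = Complex.exp (w * I) * Complex.exp (w * I) := by
    rw [← Complex.exp_add]; ring_nf
  have step1 : (Complex.cos w + Complex.I * (s:ℂ) * Complex.sin w = 0) ↔
      Complex.exp (2 * w * I) = (r:ℂ) := by
    constructor
    · intro h
      have hlin : ((1:ℂ) + s) * Complex.exp (w * I) = ((s:ℂ) - 1) * Complex.exp (-(w * I)) := by
        rw [hexp1, hexp2]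
        linear_combination 2 * h
      have : Complex.exp (2 * w * I) * ((1:ℂ) + s) = ((s:ℂ) - 1) := by
        calc Complex.exp (2 * w * I) * ((1:ℂ) + s)
            = (((1:ℂ) + s) * Complex.exp (w * I)) * Complex.exp (w * I) := by rw [h2w]; ring
          _ = ((s:ℂ) - 1) * (Complex.exp (-(w * I)) * Complex.exp (w * I)) := by rw [hlin]; ring
          _ = ((s:ℂ) - 1) := by rw [mul_comm (Complex.exp _), hprod]; ring
      have hs1C : ((s:ℂ) + 1) ≠ 0 := by
        intro hcon
        apply hs1'
        have := congrArg Complex.re hcon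
        simpa using this
      have hcast : (r:ℂ) = ((s:ℂ) - 1)/((s:ℂ) + 1) := by rw [hrdef]; push_cast; ring
      rw [hcast, eq_div_iff hs1C]
      linear_combination this
    · intro h
      have hlin : ((1:ℂ) + s) * Complex.exp (w * I) = ((s:ℂ) - 1) * Complex.exp (-(w * I)) := by
        have hs1C : ((s:ℂ) + 1) ≠ 0 := by
          intro hcon
          apply hs1'
          have := congrArg Complex.re hcon
          simpa using this
        have hcast : (r:ℂ) = ((s:ℂ) - 1)/((s:ℂ) + 1) := by rw [hrdef]; push_cast; ring
        have h1 : Complex.exp (2 * w * I) * ((1:ℂ) + s) = ((s:ℂ) - 1) := by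
          rw [h, hcast, show ((1:ℂ) + (s:ℂ)) = ((s:ℂ) + 1) from by ring,
            div_mul_cancel₀ _ hs1C]
        calc ((1:ℂ) + s) * Complex.exp (w * I)
            = Complex.exp (2 * w * I) * ((1:ℂ) + s) * Complex.exp (-(w * I)) := by
              rw [h2w]
              calc ((1:ℂ) + s) * Complex.exp (w * I)
                  = ((1:ℂ) + s) * Complex.exp (w * I) * (Complex.exp (w*I) * Complex.exp (-(w*I))) := by
                    rw [hprod]; ring
                _ = Complex.exp (w*I) * Complex.exp (w*I) * ((1:ℂ)+s) * Complex.exp (-(w*I)) := by ring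
          _ = ((s:ℂ) - 1) * Complex.exp (-(w * I)) := by rw [h1]
      rw [hexp1, hexp2] at hlin
      linear_combination hlin / 2
  -- step 3 : value of the complex log of r
  have hA1 : 1 < A := by
    rw [hAdef, abs_div]
    rw [lt_div_iff₀ (abs_pos.2 (sub_ne_zero.2 hs1))]
    rw [abs_of_pos (by linarith : (0:ℝ) < s + 1)]
    cases' abs_cases (s - 1) with h h <;> rw [h.1] <;> linarith
  have hApos : 0 < Real.log A := Real.log_pos hA1
  have step3 : Complex.log (r:ℂ) = (-(Real.log A) : ℝ) + 2*(c:ℂ)*(Real.pi:ℂ)*I := by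
    by_cases hb' : 1 < b
    · have hscomp : 1 < s := by nlinarith
      have hrpos : 0 < r := div_pos (by linarith) (by linarith)
      have h1 : Complex.log (r:ℂ) = ((Real.log r : ℝ) : ℂ) := (Complex.ofReal_log hrpos.le).symm
      have h2 : Real.log r = - Real.log A := by
        rw [hAdef, abs_of_pos (div_pos (by linarith) (by linarith) : (0:ℝ) < (s+1)/(s-1))]
        rw [hrdef, ← Real.log_inv]
        congr 1
        field_simp
      rw [h1, h2, hcdef, if_pos hb']
      push_cast
      ring
    · have hblt : b < 1 := lt_of_le_of_ne (not_lt.1 hb') hb1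
      have hscomp : s < 1 := by nlinarith
      have hrneg : r < 0 := div_neg_of_neg_of_pos (by linarith) (by linarith)
      have h1 : Complex.log (r:ℂ) = ((Real.log |r| : ℝ) : ℂ) + (Real.pi:ℂ) * I := by
        apply Complex.ext
        · simp [Complex.log_re, Complex.norm_real]
        · simp [Complex.log_im, Complex.arg_ofReal_of_neg hrneg]
      have h2 : Real.log |r| = - Real.log A := by
        rw [hAdef, hrdef, abs_div, abs_div, ← Real.log_inv]
        congr 1
        rw [abs_sub_comm]
        rw [inv_div]
      rw [h1, h2, hcdef, if_neg hb']
      push_cast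
      ring
  -- step 2+4 : chain of equivalences
  rw [show (Real.sqrt b : ℂ) * κ = w from rfl] at *
  have hw2 : Complex.I * (s:ℂ) * Complex.sin w = Complex.I * (Real.sqrt b:ℂ) * Complex.sin w := rfl
  rw [step1]
  have hexplog : (r:ℂ) = Complex.exp (Complex.log (r:ℂ)) := (Complex.exp_log hrC).symm
  rw [hexplog, Complex.exp_eq_exp_iff_exists_int]
  constructor
  · rintro ⟨n, hn⟩
    refine ⟨n, ?_⟩
    have key : (Complex.I * ((( 1 / (2 * s)) * Real.log A : ℝ) : ℂ)
        + (((Real.pi / s) * ((n : ℝ) + c) : ℝ) : ℂ)) * (2 * (s:ℂ) * I) =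
        Complex.log (r:ℂ) + n * (2 * Real.pi * I) := by
      rw [step3]
      push_cast
      have hI : (I:ℂ)^2 = -1 := Complex.I_sq
      field_simp
      linear_combination ((Real.log A : ℝ) : ℂ) * hI
    have h2 : κ * (2 * (s:ℂ) * I) = (Complex.I * ((( 1 / (2 * s)) * Real.log A : ℝ) : ℂ)
        + (((Real.pi / s) * ((n : ℝ) + c) : ℝ) : ℂ)) * (2 * (s:ℂ) * I) := by
      rw [key, ← hn, show w = (s:ℂ)*κ from rfl]; ring
    have hne : (2 * (s:ℂ) * I) ≠ 0 := by
      apply mul_ne_zero (mul_ne_zero two_ne_zero hsC) Complex.I_ne_zero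
    exact mul_right_cancel₀ hne h2
  · rintro ⟨n, hn⟩
    refine ⟨n, ?_⟩
    have key : (Complex.I * ((( 1 / (2 * s)) * Real.log A : ℝ) : ℂ)
        + (((Real.pi / s) * ((n : ℝ) + c) : ℝ) : ℂ)) * (2 * (s:ℂ) * I) =
        Complex.log (r:ℂ) + n * (2 * Real.pi * I) := by
      rw [step3]
      push_cast
      have hI : (I:ℂ)^2 = -1 := Complex.I_sq
      field_simp
      linear_combination ((Real.log A : ℝ) : ℂ) * hI
    calc 2 * w * I = κ * (2 * (s:ℂ) * I) := by
          rw [show w = (s:ℂ)*κ from rfl]; ring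
      _ = Complex.log (r:ℂ) + n * (2 * Real.pi * I) := by rw [hn, key]


lemma fwd {b : ℝ} (hb : 0 < b) {κ : ℂ} (h : QuasiEigen (fun _ => (b:ℂ)) κ) :
    Complex.cos ((Real.sqrt b:ℂ)*κ) + Complex.I * (Real.sqrt b:ℂ) * Complex.sin ((Real.sqrt b:ℂ)*κ) = 0 := by
  obtain ⟨hκ, y, y', hsol, ⟨x₀, hx₀, hyx₀⟩, h0, hbd⟩ := h
  have hform := sol_closed_form hb hκ hsol h0
  set μ : ℂ := (Real.sqrt b : ℂ) * κ with hμdef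
  have hy0 : y 0 ≠ 0 := by
    intro hcon
    apply hyx₀
    rw [(hform x₀ hx₀).1, hcon, zero_mul]
  have h1 : y 1 = y 0 * Complex.cos μ := by
    have := (hform 1 ⟨zero_le_one, le_refl 1⟩).1
    rwa [Complex.ofReal_one, mul_one] at this
  have h2 : y' 1 = -μ * y 0 * Complex.sin μ := by
    have := (hform 1 ⟨zero_le_one, le_refl 1⟩).2
    rwa [Complex.ofReal_one, mul_one] at this
  rw [h1, h2] at hbd
  have hky : κ * y 0 ≠ 0 := mul_ne_zero hκ hy0
  apply mul_left_cancel₀ hky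
  rw [mul_zero]
  linear_combination hbd - Complex.I * y 0 * Complex.sin μ * hμdef

lemma bwd {b : ℝ} (hb : 0 < b) {κ : ℂ} (hκ : κ ≠ 0)
    (heq : Complex.cos ((Real.sqrt b:ℂ)*κ) + Complex.I * (Real.sqrt b:ℂ) * Complex.sin ((Real.sqrt b:ℂ)*κ) = 0) :
    QuasiEigen (fun _ => (b:ℂ)) κ := by
  set μ : ℂ := (Real.sqrt b : ℂ) * κ with hμdef
  have hμ2 : μ ^ 2 = κ ^ 2 * (b : ℂ) := by
    rw [hμdef, mul_pow]
    have : ((Real.sqrt b : ℂ)) ^ 2 = ((Real.sqrt b ^ 2 : ℝ) : ℂ) := by push_cast; ring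
    rw [this, Real.sq_sqrt hb.le]
    ring
  refine ⟨hκ, fun x => Complex.cos (μ * x), fun x => -μ * Complex.sin (μ * x), ⟨?_, ?_, ?_⟩, ?_, ?_, ?_⟩
  · exact fun x hx => (hasDerivAt_ccos μ x).hasDerivWithinAt
  · -- Lipschitz bound for the derivative
    have hcont : Continuous (fun t : ℝ => -μ * (μ * Complex.cos (μ * t))) := by
      fun_prop
    obtain ⟨C, hC⟩ := (isCompact_Icc (a := (0:ℝ)) (b := 1)).exists_bound_of_continuousOn
      hcont.continuousOn
    refine ⟨Real.toNNReal C, ?_⟩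
    have hder : ∀ x ∈ Set.Icc (0:ℝ) 1, HasDerivWithinAt (fun t : ℝ => -μ * Complex.sin (μ * t))
        ((fun t : ℝ => -μ * (μ * Complex.cos (μ * t))) x) (Set.Icc (0:ℝ) 1) x := by
      intro x _
      exact (((hasDerivAt_csin μ x).const_mul (-μ))).hasDerivWithinAt
    refine (convex_Icc (0:ℝ) 1).lipschitzOnWith_of_nnnorm_hasDerivWithin_le hder ?_
    intro x hx
    rw [← NNReal.coe_le_coe]
    simp only [coe_nnnorm, Real.coe_toNNReal']
    exact le_trans (hC x hx) (le_max_left _ _)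
  · refine Filter.Eventually.of_forall fun x => ?_
    have := (hasDerivAt_csin μ x).const_mul (-μ)
    convert this using 1
    · rfl
    linear_combination (Complex.cos (μ * x)) * hμ2
  · exact ⟨0, ⟨le_refl 0, zero_le_one⟩, by simp⟩
  · simp
  · show κ * Complex.cos (μ * ((1:ℝ):ℂ)) = Complex.I * (-μ * Complex.sin (μ * ((1:ℝ):ℂ)))
    rw [show (((1:ℝ):ℂ)) = 1 from by norm_num, mul_one]
    linear_combination κ * heq + Complex.I * Complex.sin μ * hμdef

lemma case_zero (κ : ℂ) : ¬ QuasiEigen (fun _ => ((0:ℝ):ℂ)) κ := by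
  rintro ⟨hκ, y, y', ⟨hy, ⟨L, hL⟩, hae⟩, ⟨x₀, hx₀, hyx₀⟩, h0, hbd⟩
  have hae' : ∀ᵐ t ∂(volume.restrict (Set.Ioo (0:ℝ) 1)), HasDerivAt y' 0 t := by
    have : mu01 = volume.restrict (Set.Ioo (0:ℝ) 1) := rfl
    rw [this] at hae
    filter_upwards [hae] with t ht
    simpa using ht
  have hy'0 : ∀ x ∈ Set.Icc (0:ℝ) 1, y' x = 0 := by
    intro x hx
    rw [lip_ae_deriv_zero_const hL hae' x hx, h0]
  have hyd : ∀ x ∈ Set.Icc (0:ℝ) 1, HasDerivWithinAt y 0 (Set.Icc (0:ℝ) 1) x := by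
    intro x hx
    have := hy x hx
    rwa [hy'0 x hx] at this
  have hyconst : ∀ x ∈ Set.Icc (0:ℝ) 1, y x = y 0 := by
    refine constant_of_has_deriv_right_zero (fun x hx => (hyd x hx).continuousWithinAt) ?_
    intro x hx
    exact (hyd x ⟨hx.1, hx.2.le⟩).mono_of_mem_nhdsWithin (Icc_mem_nhdsGE_of_mem hx)
  have hy1 : y 1 = 0 := by
    have h1 := hbd
    rw [hy'0 1 ⟨zero_le_one, le_refl 1⟩] at h1
    simp only [mul_zero] at h1
    exact (mul_eq_zero.1 h1).resolve_left hκ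
  apply hyx₀
  rw [hyconst x₀ hx₀, ← hyconst 1 ⟨zero_le_one, le_refl 1⟩, hy1]


/-- Quasi-eigenvalues of constant structures.
For `B ≡ b ≥ 0`: if `b ∈ {0,1}` then `K(B) = ∅`; otherwise
`K(B) = { (i/(2√b))·log|(√b+1)/(√b−1)| + (π/√b)(n+c) : n ∈ ℤ }`,
with `c = 0` if `b > 1` and `c = 1/2` if `b < 1`. -/
theorem statement5 (b : ℝ) (hb : 0 ≤ b) :
    ((b = 0 ∨ b = 1) → ∀ κ : ℂ, ¬ QuasiEigen (fun _ => (b : ℂ)) κ) ∧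
    ((b ≠ 0 ∧ b ≠ 1) → ∀ κ : ℂ,
      (QuasiEigen (fun _ => (b : ℂ)) κ ↔
        ∃ n : ℤ, κ = Complex.I *
            ((( 1 / (2 * Real.sqrt b)) *
              Real.log (|(Real.sqrt b + 1) / (Real.sqrt b - 1)|) : ℝ) : ℂ) +
          (((Real.pi / Real.sqrt b) * ((n : ℝ) + (if 1 < b then (0:ℝ) else 1/2)) : ℝ) : ℂ))) := by
  constructor
  · rintro (rfl | rfl) κ h
    · exact case_zero κ h
    · have heq := fwd (by norm_num : (0:ℝ) < 1) h
      rw [Real.sqrt_one] at heq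
      have he := Complex.exp_mul_I (((1:ℝ):ℂ) * κ)
      have h0 : Complex.exp ((((1:ℝ):ℂ) * κ) * Complex.I) = 0 := by
        rw [he]
        push_cast at heq ⊢
        linear_combination heq
      exact Complex.exp_ne_zero _ h0
  · rintro ⟨hb0, hb1⟩ κ
    have hb' : 0 < b := lt_of_le_of_ne hb (Ne.symm hb0)
    constructor
    · intro h
      exact (alg hb' hb1 κ).1 (fwd hb' h)
    · intro hex
      have hκ : κ ≠ 0 := by
        obtain ⟨n, rfl⟩ := hex
        intro hcon
        have him := congrArg Complex.im hcon
        simp only [Complex.add_im, Complex.mul_im, Complex.I_re, Complex.I_im,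
          Complex.ofReal_re, Complex.ofReal_im, Complex.zero_im, one_mul, zero_mul,
          mul_zero, add_zero, sub_zero, zero_add] at him
        have hs : 0 < Real.sqrt b := Real.sqrt_pos.2 hb'
        have hs1 : Real.sqrt b ≠ 1 := by
          intro h
          apply hb1
          rw [← Real.sq_sqrt hb, h]
          norm_num
        have hA1 : 1 < |(Real.sqrt b + 1) / (Real.sqrt b - 1)| := by
          rw [abs_div, lt_div_iff₀ (_root_.abs_pos.2 (sub_ne_zero.2 hs1)),
            _root_.abs_of_pos (by linarith : (0:ℝ) < Real.sqrt b + 1)]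
          cases' _root_.abs_cases (Real.sqrt b - 1) with h h <;> rw [h.1] <;> linarith
        have hlog : 0 < Real.log |(Real.sqrt b + 1) / (Real.sqrt b - 1)| := Real.log_pos hA1
        have hpos : 0 < (1 / (2 * Real.sqrt b)) *
            Real.log |(Real.sqrt b + 1) / (Real.sqrt b - 1)| := by positivity
        linarith
      exact bwd hb' hκ ((alg hb' hb1 κ).2 hex)
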